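/- Let S be a monoid, let (T, F) be a torsion theory of S-acts, let A be an S-act, let ρ be a Rees congruence on A with every member of Σ_ρ belonging to T, and let π : A → A/ρ be the canonical homomorphism. Then for every B ∈ T and every homomorphism f : B → A/ρ, the subact π⁻¹(f(B)) of A belongs to T. -/

import Mathlib

universe u

/-- A (left) `S`-act: a type equipped with a monoid action of `S`. -/
structure SAct (S : Type u) [Monoid S] where
  carrier : Type u
  [mulAction : MulAction S carrier]

attribute [instance] SAct.mulAction

namespace SAct

variable {S : Type u} [Monoid S]

/-- A homomorphism of `S`-acts. -/
def IsHom (A B : SAct S) (f : A.carrier → B.carrier) : Prop :=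
  ∀ (s : S) (a : A.carrier), f (s • a) = s • f a

/-- A homomorphism is trivial if its image has at most one element. -/
def IsTrivialHom {A B : SAct S} (f : A.carrier → B.carrier) : Prop :=
  (Set.range f).Subsingleton

/-- Two `S`-acts are isomorphic if there is a bijective homomorphism between them. -/
def AreIso (A B : SAct S) : Prop :=
  ∃ f : A.carrier → B.carrier, IsHom A B f ∧ Function.Bijective f

/-- A subset of an `S`-act is a subact if it is closed under the action. -/
def IsSubact (A : SAct S) (B : Set A.carrier) : Prop :=
  ∀ (s : S), ∀ a ∈ B, s • a ∈ B

/-- The `S`-act induced on a subact. -/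
def sub (A : SAct S) (B : Set A.carrier) (h : IsSubact A B) : SAct S where
  carrier := ↥B
  mulAction :=
    { smul := fun s b => ⟨s • (b : A.carrier), h s b b.2⟩
      one_smul := fun b => Subtype.ext (one_smul S (b : A.carrier))
      mul_smul := fun s t b => Subtype.ext (mul_smul s t (b : A.carrier)) }

/-- A congruence on an `S`-act: an equivalence relation compatible with the action. -/
def IsActCon (A : SAct S) (ρ : Setoid A.carrier) : Prop :=
  ∀ (s : S) (a a' : A.carrier), ρ a a' → ρ (s • a) (s • a')

/-- The quotient `S`-act of an `S`-act by a congruence. -/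
def quot (A : SAct S) (ρ : Setoid A.carrier) (h : IsActCon A ρ) : SAct S where
  carrier := Quotient ρ
  mulAction :=
    { smul := fun s => Quotient.map (fun a => s • a) (fun a b hab => h s a b hab)
      one_smul := fun q => Quotient.inductionOn q (fun a => by
        show Quotient.map (fun a => (1 : S) • a) _ (Quotient.mk ρ a) = Quotient.mk ρ a
        rw [Quotient.map_mk, one_smul])
      mul_smul := fun s t q => Quotient.inductionOn q (fun a => by
        show Quotient.map (fun a => (s * t) • a) _ (Quotient.mk ρ a)
            = Quotient.map (fun a => s • a) _ (Quotient.map (fun a => t • a) _ (Quotient.mk ρ a))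
        rw [Quotient.map_mk, Quotient.map_mk, Quotient.map_mk, mul_smul]) }

/-- A system of pairwise disjoint non-trivial subacts of an `S`-act. -/
def IsSystem (A : SAct S) (Sys : Set (Set A.carrier)) : Prop :=
  (∀ B ∈ Sys, IsSubact A B ∧ ¬ B.Subsingleton) ∧
    (∀ B ∈ Sys, ∀ C ∈ Sys, B ≠ C → ∀ a ∈ B, a ∉ C)

/-- The Rees congruence determined by a system of pairwise disjoint
non-trivial subacts: `a` and `b` are related iff `a = b` or `a` and `b`
lie in a common member of the system. -/
def reesSetoid (A : SAct S) (Sys : Set (Set A.carrier)) (hSys : IsSystem A Sys) :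
    Setoid A.carrier where
  r a b := a = b ∨ ∃ B ∈ Sys, a ∈ B ∧ b ∈ B
  iseqv :=
    { refl := fun _ => Or.inl rfl
      symm := by
        rintro a b (rfl | ⟨B, hB, ha, hb⟩)
        · exact Or.inl rfl
        · exact Or.inr ⟨B, hB, hb, ha⟩
      trans := by
        rintro a b c (rfl | ⟨B, hB, ha, hb⟩) h2
        · exact h2
        · rcases h2 with rfl | ⟨C, hC, hb', hc⟩
          · exact Or.inr ⟨B, hB, ha, hb⟩
          · by_cases hBC : B = C
            · exact Or.inr ⟨B, hB, ha, hBC ▸ hc⟩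
            · exact absurd hb' (hSys.2 B hB C hC hBC b hb) }

/-- A Rees congruence is a congruence. -/
theorem reesSetoid_isActCon (A : SAct S) (Sys : Set (Set A.carrier)) (hSys : IsSystem A Sys) :
    IsActCon A (reesSetoid A Sys hSys) := by
  rintro s a a' (rfl | ⟨B, hB, ha, ha'⟩)
  · exact Or.inl rfl
  · exact Or.inr ⟨B, hB, (hSys.1 B hB).1 s a ha, (hSys.1 B hB).1 s a' ha'⟩

/-- The system of non-singleton classes of a congruence (for a Rees congruence,
this is its system `Σ_ρ` of non-trivial subacts). -/
def nsClasses (A : SAct S) (ρ : Setoid A.carrier) : Set (Set A.carrier) :=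
  {C | (∃ a, C = {x | ρ x a}) ∧ ¬ C.Subsingleton}

/-- A congruence is a Rees congruence if it arises from a system of pairwise
disjoint non-trivial subacts. -/
def IsRees (A : SAct S) (ρ : Setoid A.carrier) : Prop :=
  ∃ (Sys : Set (Set A.carrier)) (hSys : IsSystem A Sys), ρ = reesSetoid A Sys hSys

end SAct

open SAct

/-- A (normal) Hoehnke radical: an assignment of a congruence `rad A` to every
`S`-act `A`, functorial with respect to homomorphisms, and with
`rad (A / rad A) = Δ`. -/
structure HoehnkeRadical (S : Type u) [Monoid S] where
  rad : (A : SAct S) → Setoid A.carrier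
  isCon : ∀ A : SAct S, IsActCon A (rad A)
  functorial : ∀ {A B : SAct S} (f : A.carrier → B.carrier), IsHom A B f →
    ∀ a a' : A.carrier, rad A a a' → rad B (f a) (f a')
  rad_quot : ∀ A : SAct S, rad (A.quot (rad A) (isCon A)) = ⊥

namespace HoehnkeRadical

variable {S : Type u} [Monoid S]

/-- The radical class `R_r = {A : r(A) = ∇_A}` of a Hoehnke radical. -/
def radClass (r : HoehnkeRadical S) : Set (SAct S) := {A | r.rad A = ⊤}

/-- The semisimple class `S_r = {A : r(A) = Δ_A}` of a Hoehnke radical. -/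
def ssClass (r : HoehnkeRadical S) : Set (SAct S) := {A | r.rad A = ⊥}

/-- The pointwise order on Hoehnke radicals. -/
def le (r r' : HoehnkeRadical S) : Prop := ∀ A : SAct S, r.rad A ≤ r'.rad A

end HoehnkeRadical

/-- A Kurosh-Amitsur radical: a Hoehnke radical such that (i) every `rad A` is a
Rees congruence, (ii) every member of `Σ_{rad A}` is in the radical class, and
(iii) every system of pairwise disjoint non-trivial subacts belonging to the
radical class is below `Σ_{rad A}`. -/
structure KARadical (S : Type u) [Monoid S] extends HoehnkeRadical S where
  rees : ∀ A : SAct S, IsRees A (rad A)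
  cls_rad : ∀ A : SAct S, ∀ B ∈ nsClasses A (rad A), ∀ h : IsSubact A B,
    A.sub B h ∈ toHoehnkeRadical.radClass
  maximal : ∀ (A : SAct S) (Sys : Set (Set A.carrier)), IsSystem A Sys →
    (∀ B ∈ Sys, ∀ h : IsSubact A B, A.sub B h ∈ toHoehnkeRadical.radClass) →
    ∀ B ∈ Sys, ∃ C ∈ nsClasses A (rad A), B ⊆ C

/-- A torsion theory: a pair `(T, F)` of classes of `S`-acts, each closed under
isomorphism and containing all trivial acts, such that (1) every homomorphism
from a member of `T` to a member of `F` is trivial, (2) `T` contains every act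
all of whose homomorphisms into members of `F` are trivial, and (3) `F`
contains every act all of whose homomorphisms from members of `T` are trivial. -/
structure IsTorsionTheory {S : Type u} [Monoid S] (T F : Set (SAct S)) : Prop where
  iso_T : ∀ A B : SAct S, AreIso A B → A ∈ T → B ∈ T
  iso_F : ∀ A B : SAct S, AreIso A B → A ∈ F → B ∈ F
  trivial_T : ∀ A : SAct S, Subsingleton A.carrier → A ∈ T
  trivial_F : ∀ A : SAct S, Subsingleton A.carrier → A ∈ F
  hom_trivial : ∀ A ∈ T, ∀ B ∈ F, ∀ f : A.carrier → B.carrier,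
    IsHom A B f → IsTrivialHom (A := A) (B := B) f
  mem_T : ∀ A : SAct S,
    (∀ B ∈ F, ∀ f : A.carrier → B.carrier, IsHom A B f → IsTrivialHom (A := A) (B := B) f) →
    A ∈ T
  mem_F : ∀ B : SAct S,
    (∀ A ∈ T, ∀ f : A.carrier → B.carrier, IsHom A B f → IsTrivialHom (A := A) (B := B) f) →
    B ∈ F

/-- The product of a family of `S`-acts. -/
def prodAct {S : Type u} [Monoid S] (ι : Type u) (f : ι → SAct S) : SAct S where
  carrier := ∀ i, (f i).carrier
  mulAction := inferInstance

/-- The Hoehnke radical `r_C` determined by a class `C` closed under subacts and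
products: the meet of all congruences whose quotient lies in `C`. -/
def radC {S : Type u} [Monoid S] (C : Set (SAct S)) (A : SAct S) : Setoid A.carrier :=
  sInf {χ : Setoid A.carrier | ∃ h : IsActCon A χ, A.quot χ h ∈ C}

/-- The radical class `R_{r_C}` of the Hoehnke radical `r_C`. -/
def RradC {S : Type u} [Monoid S] (C : Set (SAct S)) : Set (SAct S) :=
  {A | radC C A = ⊤}

theorem preimage_of_torsion_image_is_torsion (S : Type u) [Monoid S]
    (T F : Set (SAct S)) (htt : IsTorsionTheory T F)
    (A : SAct S) (ρ : Setoid A.carrier) (hrees : IsRees A ρ) (hc : IsActCon A ρ)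
    (hcls : ∀ C ∈ nsClasses A ρ, ∀ h : IsSubact A C, A.sub C h ∈ T)
    (B : SAct S) (hB : B ∈ T)
    (f : B.carrier → (A.quot ρ hc).carrier) (hf : IsHom B (A.quot ρ hc) f)
    (h : IsSubact A ((fun a => (Quotient.mk ρ a : (A.quot ρ hc).carrier)) ⁻¹'
      Set.range f)) :
    A.sub ((fun a => (Quotient.mk ρ a : (A.quot ρ hc).carrier)) ⁻¹' Set.range f) h ∈ T := by
  obtain ⟨Sys, hSys, hρ⟩ := hrees
  subst hρ
  set ρ := reesSetoid A Sys hSys with hρdef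
  set P : Set A.carrier :=
    (fun a => (Quotient.mk ρ a : (A.quot ρ hc).carrier)) ⁻¹' Set.range f with hPdef
  letI : MulAction S (Quotient ρ) := (A.quot ρ hc).mulAction
  letI : MulAction S {x : A.carrier // x ∈ P} := (A.sub P h).mulAction
  apply htt.mem_T
  intro D hD g hg
  -- g is constant on ρ-related pairs in P
  have key : ∀ (a a' : A.carrier) (ha : a ∈ P) (ha' : a' ∈ P), ρ a a' →
      g ⟨a, ha⟩ = g ⟨a', ha'⟩ := by
    intro a a' ha ha' hrel
    have hrel' : a = a' ∨ ∃ C ∈ Sys, a ∈ C ∧ a' ∈ C := hrel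
    rcases hrel' with rfl | ⟨C, hC, haC, ha'C⟩
    · rfl
    · have hCsub : IsSubact A C := (hSys.1 C hC).1
      have hCns : C ∈ nsClasses A ρ := by
        refine ⟨⟨a, ?_⟩, (hSys.1 C hC).2⟩
        ext x
        constructor
        · intro hx
          show ρ x a
          exact Or.inr ⟨C, hC, hx, haC⟩
        · intro hx
          have hx' : x = a ∨ ∃ C' ∈ Sys, x ∈ C' ∧ a ∈ C' := hx
          rcases hx' with rfl | ⟨C', hC', hxC', haC'⟩
          · exact haC
          · by_cases hCC : C' = C
            · exact hCC ▸ hxC'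
            · exact absurd haC (hSys.2 C' hC' C hC hCC a haC')
      have hT := hcls C hCns hCsub
      have hmem : ∀ x ∈ C, x ∈ P := by
        intro x hx
        have hxa : (Quotient.mk ρ x : (A.quot ρ hc).carrier) = Quotient.mk ρ a :=
          Quotient.sound (Or.inr ⟨C, hC, hx, haC⟩)
        have hma : (Quotient.mk ρ a : (A.quot ρ hc).carrier) ∈ Set.range f := ha
        show (Quotient.mk ρ x : (A.quot ρ hc).carrier) ∈ Set.range f
        rw [hxa]; exact hma
      let incl : (A.sub C hCsub).carrier → (A.sub P h).carrier :=
        fun x => ⟨x.1, hmem x.1 x.2⟩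
      have hcomp : IsHom (A.sub C hCsub) D (g ∘ incl) := by
        intro s x
        have hsm : incl (s • x) = s • incl x := rfl
        show g (incl (s • x)) = s • g (incl x)
        rw [hsm]; exact hg s (incl x)
      have htriv := htt.hom_trivial _ hT D hD (g ∘ incl) hcomp
      exact htriv (Set.mem_range_self (f := g ∘ incl) ⟨a, haC⟩)
        (Set.mem_range_self (f := g ∘ incl) ⟨a', ha'C⟩)
  have key2 : ∀ (a a' : A.carrier) (ha : a ∈ P) (ha' : a' ∈ P),
      (Quotient.mk ρ a : (A.quot ρ hc).carrier) = Quotient.mk ρ a' →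
      g ⟨a, ha⟩ = g ⟨a', ha'⟩ := by
    intro a a' ha ha' he
    exact key a a' ha ha' (Quotient.exact he)
  have hout : ∀ b : B.carrier, (f b).out ∈ P := by
    intro b
    show (Quotient.mk ρ (f b).out : (A.quot ρ hc).carrier) ∈ Set.range f
    erw [Quotient.out_eq]
    exact ⟨b, rfl⟩
  set k : B.carrier → D.carrier := fun b => g ⟨(f b).out, hout b⟩ with hk
  have hsmulmk : ∀ (s : S) (a : A.carrier),
      (s • (Quotient.mk ρ a : (A.quot ρ hc).carrier))
        = (Quotient.mk ρ (s • a) : (A.quot ρ hc).carrier) := by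
    intro s a; rfl
  have hkhom : IsHom B D k := by
    intro s b
    have hmemP : s • (f b).out ∈ P := by
      show (Quotient.mk ρ (s • (f b).out) : (A.quot ρ hc).carrier) ∈ Set.range f
      erw [← hsmulmk, Quotient.out_eq]
      exact ⟨s • b, hf s b⟩
    have h1 : (Quotient.mk ρ (f (s • b)).out : (A.quot ρ hc).carrier)
        = Quotient.mk ρ (s • (f b).out) := by
      erw [Quotient.out_eq, hf, ← hsmulmk, Quotient.out_eq]; rfl
    have h2 : k (s • b) = g ⟨s • (f b).out, hmemP⟩ :=
      key2 _ _ (hout (s • b)) hmemP h1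
    have h3 : (⟨s • (f b).out, hmemP⟩ : (A.sub P h).carrier)
        = (s • (⟨(f b).out, hout b⟩ : (A.sub P h).carrier) : (A.sub P h).carrier) := rfl
    rw [h2, h3]
    exact hg s ⟨(f b).out, hout b⟩
  have hktriv := htt.hom_trivial B hB D hD k hkhom
  rintro x ⟨p, rfl⟩ y ⟨p', rfl⟩
  obtain ⟨b, hb⟩ := p.2
  obtain ⟨b', hb'⟩ := p'.2
  have hgp : g p = k b :=
    (key2 p.1 (f b).out p.2 (hout b) (by erw [Quotient.out_eq]; exact hb.symm)).symm.trans rfl |>.symm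
  have hgp' : g p' = k b' :=
    (key2 p'.1 (f b').out p'.2 (hout b') (by erw [Quotient.out_eq]; exact hb'.symm)).symm.trans rfl |>.symm
  rw [hgp, hgp']
  exact hktriv ⟨b, rfl⟩ ⟨b', rfl⟩
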